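/- Let M be a densely linearly ordered set without endpoints, equipped with the order topology, and let Y ⊆ M be type-complete at every point of M. Then either Y has nonempty interior, or Y is discrete in the subspace topology. -/

import Mathlib

/-- In a dense linear order without endpoints with its order topology, a set which is
type-complete at every point either has nonempty interior or is discrete. -/
theorem stmt_1 {M : Type*} [LinearOrder M] [DenselyOrdered M] [NoMinOrder M] [NoMaxOrder M]
    [TopologicalSpace M] [OrderTopology M] (Y : Set M)
    (htc : ∀ a : M,
      (∃ b < a, Set.Ioo b a ⊆ Y ∨ Disjoint (Set.Ioo b a) Y) ∧
      (∃ c > a, Set.Ioo a c ⊆ Y ∨ Disjoint (Set.Ioo a c) Y)) :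
    (interior Y).Nonempty ∨ DiscreteTopology Y := by
  by_cases hint : (interior Y).Nonempty
  · exact Or.inl hint
  right
  -- any nonempty open interval inside Y would give nonempty interior
  have key : ∀ a : M, ∃ b < a, ∃ c > a,
      Disjoint (Set.Ioo b a) Y ∧ Disjoint (Set.Ioo a c) Y := by
    intro a
    obtain ⟨⟨b, hb, hb'⟩, ⟨c, hc, hc'⟩⟩ := htc a
    have hsub : ∀ x y : M, x < y → ¬ (Set.Ioo x y ⊆ Y) := by
      intro x y hxy hsub
      exact hint ⟨_, (interior_maximal hsub isOpen_Ioo)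
        ((Set.nonempty_Ioo.2 hxy).choose_spec)⟩
    refine ⟨b, hb, c, hc, ?_, ?_⟩
    · rcases hb' with h | h
      · exact absurd h (hsub b a hb)
      · exact h
    · rcases hc' with h | h
      · exact absurd h (hsub a c hc)
      · exact h
  rw [discreteTopology_iff_isOpen_singleton]
  rintro ⟨a, ha⟩
  obtain ⟨b, hb, c, hc, hd1, hd2⟩ := key a
  rw [isOpen_induced_iff]
  refine ⟨Set.Ioo b c, isOpen_Ioo, ?_⟩
  ext ⟨y, hy⟩
  simp only [Set.mem_preimage, Set.mem_singleton_iff, Subtype.mk.injEq]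
  constructor
  · intro hyb
    rcases lt_trichotomy y a with h | h | h
    · exact absurd hy (Set.disjoint_left.1 hd1 ⟨hyb.1, h⟩)
    · exact h
    · exact absurd hy (Set.disjoint_left.1 hd2 ⟨h, hyb.2⟩)
  · rintro rfl; exact ⟨hb, hc⟩
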